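/- In the Uniform Price Auction, for every feasible allocation x̄*, one has Σ_i min(v_i·x̄*_i, B_i) ≤ Σ_{i=1}^k B_i + v_{k+1}, where players are sorted so v_1 ≥ ... ≥ v_n and k is the maximum integer with Σ_{j=1}^k B_j ≤ v_k. -/

import Mathlib

/-- with players sorted `v 1 ≥ ... ≥ v n > 0` (1-indexed, `v j = 0`
for `j > n`) and `k` the maximum integer with `∑_{j=1}^k B j ≤ v k`, every
feasible allocation `xstar` has liquid welfare at most `∑_{j=1}^k B j + v (k+1)`. -/
theorem stmt5 (n : ℕ) (v B : ℕ → ℝ)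
    (hv : ∀ i, 1 ≤ i → i ≤ n → 0 < v i) (hB : ∀ i, 1 ≤ i → i ≤ n → 0 < B i)
    (hsort : ∀ i j, 1 ≤ i → i ≤ j → j ≤ n → v j ≤ v i)
    (hv0 : ∀ j, n < j → v j = 0)
    (k : ℕ) (hkn : k ≤ n)
    (hk : k = 0 ∨ ∑ j ∈ Finset.Icc 1 k, B j ≤ v k)
    (hkmax : ∀ m, k < m → m ≤ n → v m < ∑ j ∈ Finset.Icc 1 m, B j) :
    ∀ xstar : ℕ → ℝ, (∀ i, 0 ≤ xstar i) → ∑ i ∈ Finset.Icc 1 n, xstar i ≤ 1 →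
      ∑ i ∈ Finset.Icc 1 n, min (v i * xstar i) (B i) ≤
        (∑ j ∈ Finset.Icc 1 k, B j) + v (k+1) := by
  intro x hx hsum
  have hvk1 : 0 ≤ v (k+1) := by
    rcases le_or_gt (k+1) n with h | h
    · exact (hv (k+1) (Nat.le_add_left 1 k) h).le
    · rw [hv0 _ h]
  have hIcc : ∀ m : ℕ, Finset.Icc 1 m = Finset.Ioc 0 m := by
    intro m; ext i; simp [Nat.lt_iff_add_one_le]
  have hsplit : (∑ i ∈ Finset.Ioc 0 k, min (v i * x i) (B i))
      + (∑ i ∈ Finset.Ioc k n, min (v i * x i) (B i))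
      = ∑ i ∈ Finset.Ioc 0 n, min (v i * x i) (B i) :=
    Finset.sum_Ioc_consecutive _ (Nat.zero_le k) hkn
  rw [hIcc, hIcc, ← hsplit]
  have h1 : ∑ i ∈ Finset.Ioc 0 k, min (v i * x i) (B i) ≤ ∑ j ∈ Finset.Ioc 0 k, B j :=
    Finset.sum_le_sum fun i _ => min_le_right _ _
  have h2 : ∑ i ∈ Finset.Ioc k n, min (v i * x i) (B i) ≤ v (k+1) := by
    calc ∑ i ∈ Finset.Ioc k n, min (v i * x i) (B i)
        ≤ ∑ i ∈ Finset.Ioc k n, v (k+1) * x i := by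
          apply Finset.sum_le_sum
          intro i hi
          simp only [Finset.mem_Ioc] at hi
          refine (min_le_left _ _).trans (mul_le_mul_of_nonneg_right ?_ (hx i))
          exact hsort (k+1) i (Nat.le_add_left 1 k) hi.1 hi.2
      _ = v (k+1) * ∑ i ∈ Finset.Ioc k n, x i := by rw [Finset.mul_sum]
      _ ≤ v (k+1) * 1 := by
          apply mul_le_mul_of_nonneg_left _ hvk1
          refine le_trans ?_ hsum
          rw [hIcc]
          exact Finset.sum_le_sum_of_subset_of_nonneg
            (Finset.Ioc_subset_Ioc (Nat.zero_le k) le_rfl) fun i _ _ => hx i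
      _ = v (k+1) := mul_one _
  linarith
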